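/- The ideal generated by a triangular system p_1, ..., p_d (p_k ∈ K[x_1,...,x_k] monic of degree n_k in x_k) is such that the quotient ring K[x_1, ..., x_d]/(p_1, ..., p_d) is a free K-module with basis the images of the monomials x_1^{i_1} ⋯ x_d^{i_d}, 0 ≤ i_k < n_k; in particular the quotient has K-dimension n_1 ⋯ n_d. -/

import Mathlib

open MvPolynomial

/-- A triangular system: `p k` is monic of degree `n k` in the variable `x k`,
with all other terms involving only variables `x j`, `j ≤ k`, and of degree
less than `n k` in `x k`. -/
def IsTriangular {K : Type*} [CommRing K] {d : ℕ} (n : Fin d → ℕ)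
    (p : Fin d → MvPolynomial (Fin d) K) : Prop :=
  ∀ k : Fin d, ∃ q : MvPolynomial (Fin d) K,
    (∀ j ∈ q.vars, j ≤ k) ∧ q.degreeOf k < n k ∧ p k = X k ^ n k + q

/-- The set of common zeros of the system in `K^d`. -/
def zeroSet {K : Type*} [CommRing K] {d : ℕ}
    (p : Fin d → MvPolynomial (Fin d) K) : Set (Fin d → K) :=
  {a : Fin d → K | ∀ k, eval a (p k) = 0}

noncomputable def lastEquiv (K : Type*) [CommRing K] (d : ℕ) :
    MvPolynomial (Fin (d+1)) K ≃ₐ[K] Polynomial (MvPolynomial (Fin d) K) :=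
  (renameEquiv K finSuccEquivLast).trans (optionEquivLeft K (Fin d))

lemma lastEquiv_X_last {K : Type*} [CommRing K] (d : ℕ) :
    lastEquiv K d (X (Fin.last d)) = Polynomial.X := by
  simp [lastEquiv, optionEquivLeft_X_none]

lemma lastEquiv_X_castSucc {K : Type*} [CommRing K] (d : ℕ) (j : Fin d) :
    lastEquiv K d (X j.castSucc) = Polynomial.C (X j) := by
  simp [lastEquiv, optionEquivLeft_X_some]

lemma lastEquiv_rename_castSucc {K : Type*} [CommRing K] (d : ℕ)
    (φ : MvPolynomial (Fin d) K) :
    lastEquiv K d (rename Fin.castSucc φ) = Polynomial.C φ := by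
  induction φ using MvPolynomial.induction_on with
  | C a => simp [lastEquiv, optionEquivLeft_C]
  | add p q hp hq => simp [map_add, hp, hq]
  | mul_X p j hp => simp [map_mul, hp, lastEquiv_X_castSucc]

lemma natDegree_lastEquiv {K : Type*} [CommRing K] (d : ℕ)
    (φ : MvPolynomial (Fin (d+1)) K) :
    (lastEquiv K d φ).natDegree = degreeOf (Fin.last d) φ := by
  have key :
      (((MvPolynomial.finSuccEquiv K d : MvPolynomial (Fin (d+1)) K →ₐ[K]
          Polynomial (MvPolynomial (Fin d) K))).comp
        (rename (Fin.rev : Fin (d+1) → Fin (d+1)))) =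
      (Polynomial.mapAlgHom (rename (Fin.rev : Fin d → Fin d))).comp
        (lastEquiv K d : MvPolynomial (Fin (d+1)) K →ₐ[K] _) := by
    apply MvPolynomial.algHom_ext
    intro k
    induction k using Fin.lastCases with
    | last =>
      simp [lastEquiv_X_last, Fin.rev_last, MvPolynomial.finSuccEquiv_X_zero]
    | cast j =>
      simp [lastEquiv_X_castSucc, Fin.rev_castSucc, MvPolynomial.finSuccEquiv_X_succ]
  have hkey := congrFun (congrArg DFunLike.coe key) φ
  simp only [AlgHom.coe_comp, Function.comp_apply, AlgEquiv.coe_algHom] at hkey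
  have h1 : ((MvPolynomial.finSuccEquiv K d) (rename Fin.rev φ)).natDegree =
      degreeOf 0 (rename Fin.rev φ) := MvPolynomial.natDegree_finSuccEquiv _
  have hrevinj : Function.Injective (Fin.rev : Fin (d+1) → Fin (d+1)) := Fin.rev_injective
  have h2 : degreeOf 0 (rename (Fin.rev : Fin (d+1) → Fin (d+1)) φ) =
      degreeOf (Fin.last d) φ := by
    have := MvPolynomial.degreeOf_rename_of_injective (p := φ) hrevinj (Fin.last d)
    rwa [Fin.rev_last] at this
  have h3 : ((Polynomial.mapAlgHom (rename (Fin.rev : Fin d → Fin d)))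
      (lastEquiv K d φ)).natDegree = (lastEquiv K d φ).natDegree := by
    apply Polynomial.natDegree_map_eq_of_injective
    exact MvPolynomial.rename_injective _ Fin.rev_injective
  erw [hkey] at h1
  erw [h3] at h1
  rw [h1, h2]

lemma quotientEquivAlg_mk' {R A B : Type*} [CommSemiring R] [CommRing A] [CommRing B]
    [Algebra R A] [Algebra R B] (I : Ideal A) (J : Ideal B) (e : A ≃ₐ[R] B)
    (h : J = I.map (e : A →+* B)) (x : A) :
    Ideal.quotientEquivAlg I J e h (Ideal.Quotient.mk I x) = Ideal.Quotient.mk J (e x) := rfl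

set_option maxHeartbeats 1000000 in
set_option synthInstance.maxHeartbeats 400000 in
theorem triangular_basis {K : Type*} [Field K] : ∀ (d : ℕ) (n : Fin d → ℕ)
    (p : Fin d → MvPolynomial (Fin d) K), IsTriangular n p →
    ∃ B : Module.Basis (∀ k, Fin (n k)) K (MvPolynomial (Fin d) K ⧸ Ideal.span (Set.range p)),
      ∀ i : ∀ k, Fin (n k), B i = Ideal.Quotient.mk (Ideal.span (Set.range p))
        (∏ k, X k ^ (i k : ℕ)) := by
  intro d
  induction d with
  | zero =>
    intro n p _
    have hJ : Ideal.span (Set.range p) = (⊥ : Ideal (MvPolynomial (Fin 0) K)) := by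
      rw [Set.range_eq_empty p, Ideal.span_empty]
    haveI : Nontrivial (MvPolynomial (Fin 0) K ⧸ Ideal.span (Set.range p)) := by
      refine Ideal.Quotient.nontrivial_iff.mpr ?_
      rw [hJ]; exact bot_ne_top
    have hbij : Function.Bijective
        (algebraMap K (MvPolynomial (Fin 0) K ⧸ Ideal.span (Set.range p))) := by
      constructor
      · exact (algebraMap K _).injective
      · intro y
        obtain ⟨x, rfl⟩ := Ideal.Quotient.mk_surjective y
        obtain ⟨a, rfl⟩ := MvPolynomial.C_surjective (Fin 0) x
        exact ⟨a, rfl⟩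
    let e := AlgEquiv.ofBijective (Algebra.ofId K _) hbij
    refine ⟨(Module.Basis.singleton (∀ k : Fin 0, Fin (n k)) K).map e.toLinearEquiv, ?_⟩
    intro i
    have : (∏ k : Fin 0, (X k : MvPolynomial (Fin 0) K) ^ (i k : ℕ)) = 1 := by simp
    simp [Module.Basis.singleton_apply, this, e, AlgEquiv.ofBijective]
  | succ d IH =>
    intro n p htri
    classical
    have hn : ∀ k, 0 < n k := fun k => by
      obtain ⟨q, -, hlt, -⟩ := htri k
      exact lt_of_le_of_lt (Nat.zero_le _) hlt
    -- the triangular system in the first d variables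
    have hp' : ∀ j : Fin d, ∃ q' : MvPolynomial (Fin d) K,
        (∀ m ∈ q'.vars, m ≤ j) ∧ q'.degreeOf j < n j.castSucc ∧
        rename Fin.castSucc (X j ^ (n j.castSucc) + q') = p j.castSucc := by
      intro j
      obtain ⟨q, hqvars, hqdeg, hqeq⟩ := htri j.castSucc
      have hsub : ↑q.vars ⊆ Set.range (Fin.castSucc : Fin d → Fin (d+1)) := by
        intro m hm
        have hm' : m ≤ j.castSucc := hqvars m (by exact_mod_cast hm)
        have : m ≠ Fin.last d := by
          intro h; rw [h] at hm'
          exact absurd (lt_of_le_of_lt hm' (Fin.castSucc_lt_last j)) (lt_irrefl _)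
        obtain ⟨m', rfl⟩ := Fin.exists_castSucc_eq.mpr this
        exact ⟨m', rfl⟩
      obtain ⟨q', hq'⟩ := exists_rename_eq_of_vars_subset_range q Fin.castSucc
        (Fin.castSucc_injective d) hsub
      have hdegs : q.degrees = q'.degrees.map Fin.castSucc := by
        rw [← hq', MvPolynomial.degrees_rename_of_injective (Fin.castSucc_injective d)]
      refine ⟨q', ?_, ?_, ?_⟩
      · intro m hm
        have hmd : m ∈ q'.degrees := by
          rw [MvPolynomial.vars_def, Multiset.mem_toFinset] at hm; exact hm
        have : m.castSucc ∈ q.vars := by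
          rw [MvPolynomial.vars_def, Multiset.mem_toFinset, hdegs]
          exact Multiset.mem_map_of_mem _ hmd
        exact (Fin.castSucc_le_castSucc_iff).mp (hqvars _ this)
      · have h := MvPolynomial.degreeOf_rename_of_injective
          (p := q') (Fin.castSucc_injective d) j
        rw [hq'] at h
        exact h ▸ hqdeg
      · rw [map_add, map_pow, rename_X, hq', hqeq]
    choose q' hq'vars hq'deg hq'eq using hp'
    obtain ⟨p', hp'def⟩ : ∃ p' : Fin d → MvPolynomial (Fin d) K,
        p' = fun j => X j ^ (n j.castSucc) + q' j := ⟨_, rfl⟩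
    have hq'eq' : ∀ j : Fin d, rename Fin.castSucc (p' j) = p j.castSucc := by
      intro j; rw [hp'def]; exact hq'eq j
    have htri' : IsTriangular (fun j => n j.castSucc) p' := by
      rw [hp'def]; exact fun j => ⟨q' j, hq'vars j, hq'deg j, rfl⟩
    obtain ⟨b, hb⟩ := IH (fun j => n j.castSucc) p' htri'
    haveI : Nontrivial (MvPolynomial (Fin d) K ⧸ Ideal.span (Set.range p')) := by
      have i0 : ∀ j : Fin d, Fin (n j.castSucc) := fun j => ⟨0, hn _⟩
      exact nontrivial_of_ne (b i0) 0 (b.ne_zero i0)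
    -- the top polynomial
    obtain ⟨q, hqvars, hqdeg, hqeq⟩ := htri (Fin.last d)
    obtain ⟨f, hf⟩ : ∃ f : Polynomial (MvPolynomial (Fin d) K),
        f = lastEquiv K d (p (Fin.last d)) := ⟨_, rfl⟩
    have hdlt : (lastEquiv K d q).degree < ((n (Fin.last d) : ℕ) : WithBot ℕ) :=
      calc (lastEquiv K d q).degree ≤ (lastEquiv K d q).natDegree :=
            Polynomial.degree_le_natDegree
        _ < ((n (Fin.last d) : ℕ) : WithBot ℕ) := by
            exact_mod_cast (natDegree_lastEquiv d q ▸ hqdeg)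
    have hfm : f.Monic := by
      rw [hf, hqeq, map_add, map_pow, lastEquiv_X_last]
      exact Polynomial.monic_X_pow_add hdlt
    have hfdeg : f.natDegree = n (Fin.last d) := by
      apply Polynomial.natDegree_eq_of_degree_eq_some
      have hd : (lastEquiv K d q).degree <
          (Polynomial.X ^ n (Fin.last d) :
            Polynomial (MvPolynomial (Fin d) K)).degree := by
        rw [Polynomial.degree_X_pow]; exact hdlt
      rw [hf, hqeq, map_add, map_pow, lastEquiv_X_last,
        Polynomial.degree_add_eq_left_of_degree_lt hd, Polynomial.degree_X_pow]
    obtain ⟨fbar, hfbar⟩ : ∃ fbar : Polynomial (MvPolynomial (Fin d) K ⧸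
        Ideal.span (Set.range p')),
        fbar = f.map (Ideal.Quotient.mk (Ideal.span (Set.range p'))) := ⟨_, rfl⟩
    have hfbarm : fbar.Monic := hfbar ▸ hfm.map _
    have hfbardeg : fbar.natDegree = n (Fin.last d) := by
      rw [hfbar, hfm.natDegree_map, hfdeg]
    -- ideal decomposition under lastEquiv
    have hJ' : (Ideal.span (Set.range p)).map
          ((lastEquiv K d : MvPolynomial (Fin (d+1)) K →+*
            Polynomial (MvPolynomial (Fin d) K))) =
        (Ideal.span (Set.range p')).map (Polynomial.C) ⊔ Ideal.span {f} := by
      rw [Ideal.map_span, Ideal.map_span, ← Ideal.span_union]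
      congr 1
      ext y
      constructor
      · rintro ⟨-, ⟨k, rfl⟩, rfl⟩
        induction k using Fin.lastCases with
        | last => exact Or.inr hf.symm
        | cast j =>
          left
          refine ⟨p' j, ⟨j, rfl⟩, ?_⟩
          show Polynomial.C (p' j) = lastEquiv K d (p j.castSucc)
          rw [← hq'eq' j]
          exact (lastEquiv_rename_castSucc d (p' j)).symm
      · rintro (⟨-, ⟨j, rfl⟩, rfl⟩ | rfl)
        · refine ⟨p j.castSucc, ⟨j.castSucc, rfl⟩, ?_⟩
          show lastEquiv K d (p j.castSucc) = Polynomial.C (p' j)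
          rw [← hq'eq' j]
          exact lastEquiv_rename_castSucc d (p' j)
        · exact ⟨p (Fin.last d), ⟨Fin.last d, rfl⟩, hf.symm⟩
    -- chain of algebra equivalences
    let e2 := Ideal.quotientEquivAlg (Ideal.span (Set.range p))
      ((Ideal.span (Set.range p)).map ((lastEquiv K d : MvPolynomial (Fin (d+1)) K →+*
          Polynomial (MvPolynomial (Fin d) K)))) (lastEquiv K d) rfl
    let e3 := Ideal.quotientEquivAlgOfEq K hJ'
    let e4 := (DoubleQuot.quotQuotEquivQuotSupₐ K
      ((Ideal.span (Set.range p')).map Polynomial.C) (Ideal.span {f})).symm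
    have he5comm : ∀ x : K,
        (Ideal.polynomialQuotientEquivQuotientPolynomial (Ideal.span (Set.range p'))).symm
          (@algebraMap K (Polynomial (MvPolynomial (Fin d) K) ⧸
            (Ideal.map Polynomial.C (Ideal.span (Set.range p')) :
              Ideal (Polynomial (MvPolynomial (Fin d) K)))) _ inferInstance _ x) =
        algebraMap K (Polynomial (MvPolynomial (Fin d) K ⧸ Ideal.span (Set.range p'))) x := by
      intro x
      show (Ideal.polynomialQuotientEquivQuotientPolynomial _).symm
        (Ideal.Quotient.mk (Ideal.map Polynomial.C (Ideal.span (Set.range p')))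
          (Polynomial.C (C x))) = _
      refine (Ideal.polynomialQuotientEquivQuotientPolynomial_symm_mk _
        (Polynomial.C (C x))).trans ?_
      rw [Polynomial.map_C]
      rfl
    let e5 : (Polynomial (MvPolynomial (Fin d) K) ⧸
          (Ideal.map Polynomial.C (Ideal.span (Set.range p')) :
            Ideal (Polynomial (MvPolynomial (Fin d) K))))
        ≃ₐ[K] Polynomial (MvPolynomial (Fin d) K ⧸ Ideal.span (Set.range p')) :=
      AlgEquiv.ofRingEquiv he5comm
    have h6 : Ideal.span {fbar} =
        ((Ideal.span {f}).map (Ideal.Quotient.mkₐ K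
          ((Ideal.span (Set.range p')).map Polynomial.C))).map
          (e5 : _ →+* Polynomial (MvPolynomial (Fin d) K ⧸ Ideal.span (Set.range p'))) := by
      simp only [Ideal.map_span, Set.image_singleton]
      have he : e5 ((Ideal.Quotient.mkₐ K
            ((Ideal.span (Set.range p')).map Polynomial.C)) f) = fbar := by
        rw [hfbar]
        exact Ideal.polynomialQuotientEquivQuotientPolynomial_symm_mk _ f
      exact congrArg (fun g => Ideal.span {g}) he.symm
    haveI : (Ideal.span {fbar}).IsTwoSided := ⟨fun {a} b ha =>
      (mul_comm (b : Polynomial (MvPolynomial (Fin d) K ⧸ Ideal.span (Set.range p'))) a) ▸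
        Ideal.mul_mem_left _ b ha⟩
    haveI : ((Ideal.span {f}).map (Ideal.Quotient.mkₐ K
        ((Ideal.span (Set.range p')).map Polynomial.C))).IsTwoSided := ⟨fun {a} b ha =>
      (mul_comm (b : Polynomial (MvPolynomial (Fin d) K) ⧸
        (Ideal.span (Set.range p')).map Polynomial.C) a) ▸ Ideal.mul_mem_left _ b ha⟩
    let e6 := Ideal.quotientEquivAlg
      ((Ideal.span {f}).map (Ideal.Quotient.mkₐ K
        ((Ideal.span (Set.range p')).map Polynomial.C)))
      (Ideal.span {fbar}) e5 h6
    let Efull : (MvPolynomial (Fin (d+1)) K ⧸ Ideal.span (Set.range p)) ≃ₐ[K]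
        AdjoinRoot fbar :=
      (e2.trans e3).trans (e4.trans e6)
    have hEfull : ∀ x : MvPolynomial (Fin (d+1)) K,
        Efull (Ideal.Quotient.mk (Ideal.span (Set.range p)) x) =
          AdjoinRoot.mk fbar ((lastEquiv K d x).map
            (Ideal.Quotient.mk (Ideal.span (Set.range p')))) := by
      intro x
      show e6 (e4 (e3 (e2 (Ideal.Quotient.mk _ x)))) = _
      have h2 : e2 (Ideal.Quotient.mk (Ideal.span (Set.range p)) x) =
          Ideal.Quotient.mk ((Ideal.span (Set.range p)).map
            ((lastEquiv K d : MvPolynomial (Fin (d+1)) K →+*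
            Polynomial (MvPolynomial (Fin d) K)))) (lastEquiv K d x) :=
        quotientEquivAlg_mk' _ _ _ _ x
      rw [h2]
      have h3 : e3 (Ideal.Quotient.mk _ (lastEquiv K d x)) =
          Ideal.Quotient.mk ((Ideal.span (Set.range p')).map Polynomial.C ⊔ Ideal.span {f})
            (lastEquiv K d x) :=
        Ideal.quotientEquivAlgOfEq_mk K hJ' _
      rw [h3]
      have h4 : e4 (Ideal.Quotient.mk
            ((Ideal.span (Set.range p')).map Polynomial.C ⊔ Ideal.span {f})
            (lastEquiv K d x)) =
          Ideal.Quotient.mk ((Ideal.span {f}).map (Ideal.Quotient.mkₐ K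
              ((Ideal.span (Set.range p')).map Polynomial.C)))
            (Ideal.Quotient.mk ((Ideal.span (Set.range p')).map Polynomial.C)
              (lastEquiv K d x)) := by
        show (DoubleQuot.quotQuotEquivQuotSupₐ K _ _).symm _ = _
        rw [DoubleQuot.coe_quotQuotEquivQuotSupₐ_symm,
          DoubleQuot.quotQuotEquivQuotSup_symm_quotQuotMk]
        rfl
      rw [h4]
      have h6' : e6 (Ideal.Quotient.mk ((Ideal.span {f}).map
            (Ideal.Quotient.mkₐ K ((Ideal.span (Set.range p')).map Polynomial.C)))
            (Ideal.Quotient.mk ((Ideal.span (Set.range p')).map Polynomial.C)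
              (lastEquiv K d x))) =
          Ideal.Quotient.mk (Ideal.span {fbar})
            (e5 (Ideal.Quotient.mk ((Ideal.span (Set.range p')).map Polynomial.C)
              (lastEquiv K d x))) :=
        rfl
      rw [h6']
      have h5 : e5 (Ideal.Quotient.mk ((Ideal.span (Set.range p')).map Polynomial.C)
            (lastEquiv K d x)) =
          (lastEquiv K d x).map (Ideal.Quotient.mk (Ideal.span (Set.range p'))) := by
        show (Ideal.polynomialQuotientEquivQuotientPolynomial _).symm _ = _
        rw [Ideal.polynomialQuotientEquivQuotientPolynomial_symm_mk]
      rw [h5]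
      rfl
    -- the value of Efull on the basis monomials
    have hval : ∀ i : (∀ k : Fin (d+1), Fin (n k)),
        Efull (Ideal.Quotient.mk (Ideal.span (Set.range p)) (∏ k, X k ^ (i k : ℕ))) =
          (Ideal.Quotient.mk (Ideal.span (Set.range p'))
              (∏ j : Fin d, X j ^ (i j.castSucc : ℕ))) •
            (AdjoinRoot.root fbar) ^ ((i (Fin.last d) : ℕ)) := by
      intro i
      rw [hEfull]
      have hg : AdjoinRoot.mk fbar ((lastEquiv K d (∏ k, X k ^ (i k : ℕ))).map
            (Ideal.Quotient.mk (Ideal.span (Set.range p')))) =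
          ((AdjoinRoot.mk fbar).comp ((Polynomial.mapRingHom
            (Ideal.Quotient.mk (Ideal.span (Set.range p')))).comp
            (lastEquiv K d : MvPolynomial (Fin (d+1)) K →+*
              Polynomial (MvPolynomial (Fin d) K))))
            (∏ k, X k ^ (i k : ℕ)) := rfl
      rw [hg, map_prod, Fin.prod_univ_castSucc]
      have hcast : ∀ j : Fin d,
          ((AdjoinRoot.mk fbar).comp ((Polynomial.mapRingHom
            (Ideal.Quotient.mk (Ideal.span (Set.range p')))).comp
            (lastEquiv K d : MvPolynomial (Fin (d+1)) K →+*
              Polynomial (MvPolynomial (Fin d) K))))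
            (X j.castSucc ^ (i j.castSucc : ℕ)) =
          (algebraMap (MvPolynomial (Fin d) K ⧸ Ideal.span (Set.range p'))
            (AdjoinRoot fbar)
            (Ideal.Quotient.mk (Ideal.span (Set.range p')) (X j))) ^ (i j.castSucc : ℕ) := by
        intro j
        rw [map_pow]
        congr 1
        show AdjoinRoot.mk fbar ((lastEquiv K d (X j.castSucc)).map
          (Ideal.Quotient.mk (Ideal.span (Set.range p')))) = _
        rw [lastEquiv_X_castSucc, Polynomial.map_C]
        exact AdjoinRoot.mk_C _
      rw [Finset.prod_congr rfl (fun j _ => hcast j)]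
      have hlastf : ((AdjoinRoot.mk fbar).comp ((Polynomial.mapRingHom
            (Ideal.Quotient.mk (Ideal.span (Set.range p')))).comp
            (lastEquiv K d : MvPolynomial (Fin (d+1)) K →+*
              Polynomial (MvPolynomial (Fin d) K))))
            (X (Fin.last d) ^ (i (Fin.last d) : ℕ)) =
          (AdjoinRoot.root fbar) ^ (i (Fin.last d) : ℕ) := by
        rw [map_pow]
        congr 1
        show AdjoinRoot.mk fbar ((lastEquiv K d (X (Fin.last d))).map
          (Ideal.Quotient.mk (Ideal.span (Set.range p')))) = _
        rw [lastEquiv_X_last, Polynomial.map_X]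
        exact AdjoinRoot.mk_X
      rw [hlastf]
      have hprod : (∏ j : Fin d, (algebraMap (MvPolynomial (Fin d) K ⧸
            Ideal.span (Set.range p')) (AdjoinRoot fbar)
            (Ideal.Quotient.mk (Ideal.span (Set.range p')) (X j))) ^ (i j.castSucc : ℕ)) =
          algebraMap (MvPolynomial (Fin d) K ⧸ Ideal.span (Set.range p')) (AdjoinRoot fbar)
            (Ideal.Quotient.mk (Ideal.span (Set.range p'))
              (∏ j : Fin d, X j ^ (i j.castSucc : ℕ))) := by
        rw [map_prod, map_prod]
        exact Finset.prod_congr rfl (fun j _ => by rw [map_pow, map_pow])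
      rw [hprod]
      exact (Algebra.smul_def _ _).symm
    -- assemble the basis
    haveI : Nontrivial (MvPolynomial (Fin d) K ⧸ Ideal.span (Set.range p')) := inferInstance
    let pb := AdjoinRoot.powerBasis' hfbarm
    let bS : Module.Basis ((∀ j : Fin d, Fin (n j.castSucc)) × Fin pb.dim) K (AdjoinRoot fbar) :=
      b.smulTower pb.basis
    have hdim : n (Fin.last d) = pb.dim := by
      rw [AdjoinRoot.powerBasis'_dim, hfbardeg]
    let eIdx : (∀ k : Fin (d+1), Fin (n k)) ≃
        ((∀ j : Fin d, Fin (n j.castSucc)) × Fin (n (Fin.last d))) :=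
      { toFun := fun i => (fun j => i j.castSucc, i (Fin.last d))
        invFun := fun x k => Fin.lastCases x.2 x.1 k
        left_inv := fun i => funext fun k => by
          induction k using Fin.lastCases with
          | last => simp
          | cast j => simp
        right_inv := fun x => by
          refine Prod.ext ?_ ?_
          · funext j; simp
          · simp }
    let eTot : (∀ k : Fin (d+1), Fin (n k)) ≃
        ((∀ j : Fin d, Fin (n j.castSucc)) × Fin pb.dim) :=
      eIdx.trans (Equiv.prodCongr (Equiv.refl _) (finCongr hdim))
    refine ⟨(bS.map Efull.symm.toLinearEquiv).reindex eTot.symm, ?_⟩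
    intro i
    rw [Module.Basis.reindex_apply, Equiv.symm_symm, Module.Basis.map_apply]
    have hbS : bS (eTot i) = b (fun j => i j.castSucc) •
        (AdjoinRoot.root fbar) ^ (i (Fin.last d) : ℕ) := by
      rw [Module.Basis.smulTower_apply]
      congr 1
      show pb.basis (finCongr hdim (i (Fin.last d))) = _
      rw [pb.basis_eq_pow]
      rw [AdjoinRoot.powerBasis'_gen]
      simp
    rw [hbS, hb]
    rw [AlgEquiv.toLinearEquiv_apply]
    rw [← hval i]
    exact Efull.symm_apply_apply _

theorem stmt_13 {K : Type*} [Field K] {d : ℕ}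
    (n : Fin d → ℕ) (p : Fin d → MvPolynomial (Fin d) K)
    (htri : IsTriangular n p) :
    ∃ B : Module.Basis (∀ k, Fin (n k)) K
        (MvPolynomial (Fin d) K ⧸ Ideal.span (Set.range p)),
      (∀ i : ∀ k, Fin (n k),
        B i = Ideal.Quotient.mk (Ideal.span (Set.range p))
          (∏ k, X k ^ (i k : ℕ))) ∧
      Module.finrank K (MvPolynomial (Fin d) K ⧸ Ideal.span (Set.range p)) =
        ∏ k, n k := by
  obtain ⟨B, hB⟩ := triangular_basis d n p htri
  refine ⟨B, hB, ?_⟩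
  rw [Module.finrank_eq_card_basis B, Fintype.card_pi]
  simp
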